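/- arXiv:2208.02679 — 4 statements merged into one kernel-verified Lean document; each statement's English description precedes it below -/
import Mathlib

section
/- For every ξ ∈ ℝⁿ and every τ ∈ ℂ, the characteristic determinant of the principal symbol factorizes as det(τ Iₙ − a₂(ξ)) = (τ − μ|ξ|²)^{n−1} · (τ − (2μ+λ)|ξ|²). -/
open Matrix BigOperators

section Aux
open Polynomial

private lemma det_smul_one_add_col_mul_row_ne (n : ℕ) (hn : 1 ≤ n) (u v : Fin n → ℂ)
    (s : ℂ) (hs : s ≠ 0) :
    (s • (1 : Matrix (Fin n) (Fin n) ℂ) + replicateCol Unit u * replicateRow Unit v).det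
      = s ^ (n - 1) * (s + v ⬝ᵥ u) := by
  have hA : IsUnit (s • (1 : Matrix (Fin n) (Fin n) ℂ)).det := by
    simp [det_smul, hs]
  rw [Matrix.det_add_replicateCol_mul_replicateRow hA u v]
  haveI := invertibleOfNonzero hs
  have hinv : (s • (1 : Matrix (Fin n) (Fin n) ℂ))⁻¹ = s⁻¹ • 1 := by
    rw [Matrix.inv_smul (A := (1 : Matrix (Fin n) (Fin n) ℂ)) s (by simp), inv_one,
      invOf_eq_inv s]
  rw [hinv, det_smul, det_one, det_unique]
  have h2 : ((1 + replicateRow Unit v * (s⁻¹ • (1 : Matrix (Fin n) (Fin n) ℂ)) * replicateCol Unit u :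
      Matrix Unit Unit ℂ)) default default = 1 + s⁻¹ * (v ⬝ᵥ u) := by
    simp [Matrix.mul_apply, dotProduct, Finset.mul_sum, mul_comm, mul_left_comm]
  rw [h2]
  have hpow : s ^ n = s ^ (n - 1) * s := by
    conv_lhs => rw [← Nat.sub_add_cancel hn, pow_succ]
  rw [Fintype.card_fin, hpow]
  field_simp

private lemma det_smul_one_add_col_mul_row (n : ℕ) (hn : 1 ≤ n) (u v : Fin n → ℂ) (s : ℂ) :
    (s • (1 : Matrix (Fin n) (Fin n) ℂ) + replicateCol Unit u * replicateRow Unit v).det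
      = s ^ (n - 1) * (s + v ⬝ᵥ u) := by
  set P : Matrix (Fin n) (Fin n) ℂ[X] :=
    (X : ℂ[X]) • 1 + ((replicateCol Unit u * replicateRow Unit v).map C) with hP
  have hmap : ∀ x : ℂ, P.map (eval x) =
      x • (1 : Matrix (Fin n) (Fin n) ℂ) + replicateCol Unit u * replicateRow Unit v := by
    intro x
    ext i j
    simp [hP, Matrix.map_apply, Matrix.mul_apply, Matrix.one_apply, apply_ite (eval x)]
  have hdet : ∀ x : ℂ, eval x P.det =
      (x • (1 : Matrix (Fin n) (Fin n) ℂ) + replicateCol Unit u * replicateRow Unit v).det := by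
    intro x
    rw [← hmap x, ← coe_evalRingHom, RingHom.map_det, RingHom.mapMatrix_apply]
  have key : P.det = X ^ (n - 1) * (X + C (v ⬝ᵥ u)) := by
    apply eq_of_infinite_eval_eq
    apply Set.Infinite.mono (s := {x : ℂ | x ≠ 0})
    · intro x hx
      simp only [Set.mem_setOf_eq]
      rw [hdet x, det_smul_one_add_col_mul_row_ne n hn u v x hx]
      simp
    · exact Set.Finite.infinite_compl (Set.finite_singleton 0)
  have := hdet s
  rw [key] at this
  simpa using this.symm

end Aux

/-- The principal symbol of the Navier–Lamé operator:
`a₂(ξ) = μ|ξ|² Iₙ + (μ+λ) ξξᵀ`. -/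
noncomputable def a2 (n : ℕ) (μ lam : ℝ) (ξ : Fin n → ℝ) : Matrix (Fin n) (Fin n) ℝ :=
  (μ * ∑ i, ξ i ^ 2) • (1 : Matrix (Fin n) (Fin n) ℝ) +
    (μ + lam) • Matrix.of fun j k => ξ j * ξ k

/-- the characteristic determinant of the principal symbol factorizes as
det(τ Iₙ − a₂(ξ)) = (τ − μ|ξ|²)^{n−1} (τ − (2μ+λ)|ξ|²). -/
theorem a2_char_det (n : ℕ) (hn : 1 ≤ n) (μ lam : ℝ) (hμ : 0 < μ) (hlam : 0 ≤ lam + μ)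
    (ξ : Fin n → ℝ) (τ : ℂ) :
    (τ • (1 : Matrix (Fin n) (Fin n) ℂ) - (a2 n μ lam ξ).map (fun r => (r : ℂ))).det
      = (τ - ((μ * ∑ i, ξ i ^ 2 : ℝ) : ℂ)) ^ (n - 1) *
        (τ - (((2 * μ + lam) * ∑ i, ξ i ^ 2 : ℝ) : ℂ)) := by
  set c : ℂ := ((μ * ∑ i, ξ i ^ 2 : ℝ) : ℂ) with hc
  set β : ℂ := ((μ + lam : ℝ) : ℂ) with hβ
  set u : Fin n → ℂ := fun i => -β * (ξ i : ℂ) with hu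
  set v : Fin n → ℂ := fun i => (ξ i : ℂ) with hv
  have hM : τ • (1 : Matrix (Fin n) (Fin n) ℂ) - (a2 n μ lam ξ).map (fun r => (r : ℂ))
      = (τ - c) • (1 : Matrix (Fin n) (Fin n) ℂ) + replicateCol Unit u * replicateRow Unit v := by
    ext i j
    simp only [a2, Matrix.sub_apply, Matrix.add_apply, Matrix.smul_apply, Matrix.map_apply,
      Matrix.mul_apply, Matrix.one_apply, Matrix.of_apply, Finset.univ_unique,
      Finset.sum_singleton, Matrix.replicateCol_apply, Matrix.replicateRow_apply, hu, hv, hc, hβ,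
      smul_eq_mul]
    push_cast
    by_cases h : i = j <;> simp [h] <;> ring
  rw [hM, det_smul_one_add_col_mul_row n hn u v (τ - c)]
  have hdot : v ⬝ᵥ u = -β * ((∑ i, ξ i ^ 2 : ℝ) : ℂ) := by
    simp only [dotProduct, hu, hv]
    push_cast [Finset.mul_sum]
    exact Finset.sum_congr rfl fun i _ => by ring
  rw [hdot]
  congr 1
  rw [hc, hβ]
  push_cast
  ring
end

section
/- For every ξ ∈ ℝⁿ with ξ ≠ 0 and every t ∈ ℝ, the matrix exponential of −t a₂(ξ) is given explicitly by exp(−t a₂(ξ)) = e^{−μ t |ξ|²} (Iₙ − |ξ|⁻² ξξᵀ) + e^{−(2μ+λ) t |ξ|²} |ξ|⁻² ξξᵀ. -/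
open Matrix BigOperators

/-- The algebra hom `(x,y) ↦ x•(1-M) + y•M` for an idempotent `M`. -/
noncomputable def projHom {n : ℕ} (M : Matrix (Fin n) (Fin n) ℝ) (hM : M * M = M) :
    (ℝ × ℝ) →ₐ[ℝ] Matrix (Fin n) (Fin n) ℝ where
  toFun p := p.1 • ((1 : Matrix (Fin n) (Fin n) ℝ) - M) + p.2 • M
  map_one' := by simp
  map_mul' p q := by
    have h1 : ((1 : Matrix (Fin n) (Fin n) ℝ) - M) * (1 - M) = 1 - M := by
      simp [sub_mul, mul_sub, hM]
    have h2 : ((1 : Matrix (Fin n) (Fin n) ℝ) - M) * M = 0 := by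
      simp [sub_mul, hM]
    have h3 : M * ((1 : Matrix (Fin n) (Fin n) ℝ) - M) = 0 := by
      simp [mul_sub, hM]
    simp only [Prod.fst_mul, Prod.snd_mul, add_mul, mul_add, smul_mul_smul_comm,
      h1, h2, h3, hM, smul_zero, add_zero, zero_add]
  map_zero' := by simp
  map_add' p q := by
    simp only [Prod.fst_add, Prod.snd_add, add_smul]
    abel
  commutes' r := by
    simp [Algebra.algebraMap_eq_smul_one, smul_sub]

open NormedSpace in
theorem exp_projHom {n : ℕ} (M : Matrix (Fin n) (Fin n) ℝ) (hM : M * M = M) (p : ℝ × ℝ) :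
    exp (projHom M hM p) = projHom M hM (Real.exp p.1, Real.exp p.2) := by
  letI : SeminormedRing (Matrix (Fin n) (Fin n) ℝ) := Matrix.linftyOpSemiNormedRing
  letI : NormedRing (Matrix (Fin n) (Fin n) ℝ) := Matrix.linftyOpNormedRing
  letI : NormedAlgebra ℝ (Matrix (Fin n) (Fin n) ℝ) := Matrix.linftyOpNormedAlgebra
  have hc : Continuous (projHom M hM) := by
    show Continuous fun p : ℝ × ℝ =>
      p.1 • ((1 : Matrix (Fin n) (Fin n) ℝ) - M) + p.2 • M
    fun_prop
  erw [← map_exp (projHom M hM) hc p]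
  congr 1
  ext
  · rw [Prod.fst_exp, ← Real.exp_eq_exp_ℝ]
  · rw [Prod.snd_exp, ← Real.exp_eq_exp_ℝ]

open NormedSpace in
/-- explicit formula for the matrix exponential of −t a₂(ξ), ξ ≠ 0:
exp(−t a₂(ξ)) = e^{−μt|ξ|²}(Iₙ − |ξ|⁻²ξξᵀ) + e^{−(2μ+λ)t|ξ|²}|ξ|⁻²ξξᵀ. -/
theorem a2_heat_symbol (n : ℕ) (hn : 1 ≤ n) (μ lam : ℝ) (hμ : 0 < μ) (hlam : 0 ≤ lam + μ)
    (ξ : Fin n → ℝ) (hξ : ξ ≠ 0) (t : ℝ) :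
    exp ((-t) • a2 n μ lam ξ)
      = Real.exp (-(μ * t * ∑ i, ξ i ^ 2)) •
          ((1 : Matrix (Fin n) (Fin n) ℝ) -
            (∑ i, ξ i ^ 2)⁻¹ • Matrix.of (fun j k => ξ j * ξ k)) +
        Real.exp (-((2 * μ + lam) * t * ∑ i, ξ i ^ 2)) •
          ((∑ i, ξ i ^ 2)⁻¹ • Matrix.of (fun j k => ξ j * ξ k)) := by
  set s : ℝ := ∑ i, ξ i ^ 2 with hs
  have hspos : 0 < s := by
    obtain ⟨i, hi⟩ := Function.ne_iff.mp hξ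
    exact Finset.sum_pos' (fun i _ => sq_nonneg _)
      ⟨i, Finset.mem_univ i, pow_two_pos_of_ne_zero hi⟩
  have hsne : s ≠ 0 := ne_of_gt hspos
  set N : Matrix (Fin n) (Fin n) ℝ := Matrix.of (fun j k => ξ j * ξ k) with hN
  have hNN : N * N = s • N := by
    ext j k
    simp [hN, Matrix.mul_apply, Matrix.smul_apply, Finset.mul_sum, Finset.sum_mul, hs,
      smul_eq_mul, sq]
    exact Finset.sum_congr rfl fun l _ => by ring
  set M : Matrix (Fin n) (Fin n) ℝ := s⁻¹ • N with hM
  have hMM : M * M = M := by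
    rw [hM, smul_mul_smul_comm, hNN, smul_smul]
    congr 1
    field_simp
  have key : (-t) • a2 n μ lam ξ = projHom M hMM (-(μ * t * s), -((2 * μ + lam) * t * s)) := by
    have hNM : N = s • M := by
      rw [hM, smul_smul, mul_inv_cancel₀ hsne, one_smul]
    simp only [projHom, AlgHom.coe_mk, RingHom.coe_mk, MonoidHom.coe_mk, OneHom.coe_mk]
    rw [a2, ← hs, ← hN, hNM]
    simp only [smul_smul, smul_sub, smul_add]
    module
  rw [key, exp_projHom]
  simp only [projHom, AlgHom.coe_mk, RingHom.coe_mk, MonoidHom.coe_mk, OneHom.coe_mk]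
end

section
/- For every t > 0, (2π)⁻ⁿ ∫_{ℝⁿ} Tr[exp(−t a₂(ξ))] dξ = (n−1) (4πμt)^{−n/2} + (4π(2μ+λ)t)^{−n/2}. (This is the interior heat-trace density, i.e. the coefficient of Vol(Ω) in the leading term of the two-term asymptotics of Σ_k e^{−τ_k t} for the Navier–Lamé operator.) -/
open Matrix BigOperators Real

section HeatAuxSection

attribute [local instance] Matrix.linftyOpNormedAddCommGroup Matrix.linftyOpNormedRing
  Matrix.linftyOpNormedAlgebra

open NormedSpace

namespace HeatAux

variable {n : ℕ}

/-- The projection-type matrix ξξᵀ. -/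
noncomputable def P (ξ : Fin n → ℝ) : Matrix (Fin n) (Fin n) ℝ :=
  Matrix.of fun j k => ξ j * ξ k

lemma P_mul_P (ξ : Fin n → ℝ) : P ξ * P ξ = (∑ i, ξ i ^ 2) • P ξ := by
  ext j k
  simp only [P, Matrix.mul_apply, Matrix.smul_apply, Matrix.of_apply, smul_eq_mul,
    Finset.sum_mul]
  refine Finset.sum_congr rfl fun i _ => by ring

lemma P_pow (ξ : Fin n → ℝ) (k : ℕ) : P ξ ^ (k + 1) = (∑ i, ξ i ^ 2) ^ k • P ξ := by
  induction k with
  | zero => simp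
  | succ k ih =>
      rw [pow_succ, ih, Matrix.smul_mul, P_mul_P, smul_smul, pow_succ]

lemma trace_P (ξ : Fin n → ℝ) : (P ξ).trace = ∑ i, ξ i ^ 2 := by
  simp [P, Matrix.trace, Matrix.diag, sq]

lemma trace_exp_smul_P (ξ : Fin n → ℝ) (b : ℝ) :
    (exp (b • P ξ)).trace = (n : ℝ) - 1 + Real.exp (b * ∑ i, ξ i ^ 2) := by
  set s : ℝ := ∑ i, ξ i ^ 2 with hs
  have hsum : Summable fun k : ℕ => (k.factorial⁻¹ : ℝ) • (b • P ξ) ^ k :=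
    expSeries_summable' (𝕂 := ℝ) _
  let T : Matrix (Fin n) (Fin n) ℝ →L[ℝ] ℝ :=
    LinearMap.toContinuousLinearMap (Matrix.traceLinearMap (Fin n) ℝ ℝ)
  have h1 : (exp (b • P ξ)).trace
      = ∑' k : ℕ, (k.factorial⁻¹ : ℝ) • ((b • P ξ) ^ k).trace := by
    have hTapp : ∀ M : Matrix (Fin n) (Fin n) ℝ, T M = M.trace := fun _ => rfl
    have := T.map_tsum hsum
    rw [exp_eq_tsum ℝ, ← hTapp _, this]
    exact tsum_congr fun k => by rw [_root_.map_smul, hTapp]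
  have h2 : ∀ k : ℕ, (((k+1).factorial⁻¹ : ℝ)) • (((b • P ξ) ^ (k+1)).trace)
      = (b * s) ^ (k+1) / (k+1).factorial := by
    intro k
    rw [smul_pow, P_pow, smul_smul, Matrix.trace_smul, trace_P, ← hs]
    rw [smul_eq_mul, smul_eq_mul, mul_pow]
    field_simp
    ring
  have hsumtr : Summable fun k : ℕ => (k.factorial⁻¹ : ℝ) • ((b • P ξ) ^ k).trace := by
    have := hsum.map T T.continuous
    refine this.congr fun k => ?_
    show T _ = _
    rw [_root_.map_smul]; rfl
  have hexp : Real.exp (b * s) = ∑' k : ℕ, (b * s) ^ k / k.factorial := by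
    rw [Real.exp_eq_exp_ℝ, exp_eq_tsum_div]
  rw [h1, Summable.tsum_eq_zero_add hsumtr]
  rw [hexp, Summable.tsum_eq_zero_add (Real.summable_pow_div_factorial (b * s))]
  simp only [h2, pow_zero, Nat.factorial_zero, Nat.cast_one, inv_one, one_smul, pow_zero]
  rw [Matrix.trace_one]
  simp
  ring

lemma exp_smul_one (a : ℝ) :
    exp (a • (1 : Matrix (Fin n) (Fin n) ℝ)) = Real.exp a • 1 := by
  have h : a • (1 : Matrix (Fin n) (Fin n) ℝ) = algebraMap ℝ _ a :=
    (Algebra.algebraMap_eq_smul_one a).symm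
  erw [h, ← algebraMap_exp_comm, ← Real.exp_eq_exp_ℝ, Algebra.algebraMap_eq_smul_one]

lemma trace_exp_neg_smul_a2 (μ lam t : ℝ) (ξ : Fin n → ℝ) :
    (exp ((-t) • a2 n μ lam ξ)).trace
      = ((n : ℝ) - 1) * Real.exp (-(t * μ) * ∑ i, ξ i ^ 2)
        + Real.exp (-(t * (2 * μ + lam)) * ∑ i, ξ i ^ 2) := by
  set s : ℝ := ∑ i, ξ i ^ 2 with hs
  have hdecomp : (-t) • a2 n μ lam ξ
      = ((-t) * (μ * s)) • (1 : Matrix (Fin n) (Fin n) ℝ) + ((-t) * (μ + lam)) • P ξ := by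
    simp [a2, P, smul_add, smul_smul, hs]
  rw [hdecomp,
    Matrix.exp_add_of_commute _ _ (((Commute.one_left (P ξ)).smul_left _).smul_right _),
    exp_smul_one, smul_mul_assoc, one_mul, Matrix.trace_smul, smul_eq_mul, trace_exp_smul_P,
    mul_add, ← Real.exp_add, ← hs]
  ring_nf

end HeatAux

end HeatAuxSection

section GaussSection

open MeasureTheory

variable {n : ℕ}

lemma gauss_prod_form (c : ℝ) (ξ : Fin n → ℝ) :
    Real.exp (-c * ∑ i, ξ i ^ 2) = ∏ i, Real.exp (-c * ξ i ^ 2) := by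
  rw [← Real.exp_sum]
  congr 1
  rw [Finset.mul_sum]

lemma integrable_gauss_pi {c : ℝ} (hc : 0 < c) :
    Integrable (fun ξ : Fin n → ℝ => Real.exp (-c * ∑ i, ξ i ^ 2)) := by
  simp_rw [gauss_prod_form]
  exact Integrable.fintype_prod fun _ => integrable_exp_neg_mul_sq hc

lemma integral_gauss_pi {c : ℝ} (hc : 0 < c) :
    ∫ ξ : Fin n → ℝ, Real.exp (-c * ∑ i, ξ i ^ 2) = Real.sqrt (π / c) ^ n := by
  simp_rw [gauss_prod_form]
  rw [MeasureTheory.volume_pi, MeasureTheory.integral_fintype_prod_eq_pow (fun x : ℝ => Real.exp (-c * x ^ 2)),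
    integral_gaussian]
  simp

lemma final_alg {c : ℝ} (hc : 0 < c) :
    ((2 * π) ^ n)⁻¹ * Real.sqrt (π / c) ^ n = (4 * π * c) ^ (-(n : ℝ) / 2) := by
  have hπ : 0 < π := Real.pi_pos
  have h1 : Real.sqrt (π / c) ^ n = (π / c) ^ ((n : ℝ) / 2) := by
    rw [Real.sqrt_eq_rpow, ← Real.rpow_natCast ((π / c) ^ (1/2 : ℝ)) n,
      ← Real.rpow_mul (div_pos hπ hc).le]
    norm_num
    ring_nf
  have h2 : ((2 * π) ^ n)⁻¹ = ((4 * π ^ 2 : ℝ))⁻¹ ^ ((n : ℝ) / 2) := by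
    have key : ((4 * π ^ 2 : ℝ))⁻¹ = (2 * π) ^ (-(2 : ℝ)) := by
      rw [Real.rpow_neg (by positivity), show ((2:ℝ)) = ((2:ℕ):ℝ) by norm_num,
        Real.rpow_natCast]
      norm_num
      ring_nf
    rw [key, ← Real.rpow_natCast (2 * π) n, ← Real.rpow_neg (by positivity),
      ← Real.rpow_mul (by positivity)]
    congr 1
    ring
  rw [h1, h2, ← Real.mul_rpow (by positivity) (div_pos hπ hc).le,
    show ((4 * π ^ 2 : ℝ))⁻¹ * (π / c) = (4 * π * c)⁻¹ by field_simp,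
    ← Real.rpow_neg_one (4 * π * c)]
  rw [← Real.rpow_mul (by positivity : (0:ℝ) ≤ 4 * π * c)]
  congr 1
  ring

end GaussSection

open NormedSpace in
/-- the interior heat-trace density:
(2π)⁻ⁿ ∫_{ℝⁿ} Tr[exp(−t a₂(ξ))] dξ = (n−1)(4πμt)^{−n/2} + (4π(2μ+λ)t)^{−n/2}. -/
theorem interior_heat_trace_density (n : ℕ) (hn : 1 ≤ n) (μ lam : ℝ) (hμ : 0 < μ)
    (hlam : 0 ≤ lam + μ) (t : ℝ) (ht : 0 < t) :
    ((2 * π) ^ n)⁻¹ * (∫ ξ : Fin n → ℝ, (exp ((-t) • a2 n μ lam ξ)).trace)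
      = ((n : ℝ) - 1) * (4 * π * μ * t) ^ (-(n : ℝ) / 2) +
        (4 * π * (2 * μ + lam) * t) ^ (-(n : ℝ) / 2) := by
  have h2μ : 0 < 2 * μ + lam := by linarith
  have hc1 : 0 < t * μ := mul_pos ht hμ
  have hc2 : 0 < t * (2 * μ + lam) := mul_pos ht h2μ
  have hpt : ∀ ξ : Fin n → ℝ, (exp ((-t) • a2 n μ lam ξ)).trace
      = ((n : ℝ) - 1) * Real.exp (-(t * μ) * ∑ i, ξ i ^ 2)
        + Real.exp (-(t * (2 * μ + lam)) * ∑ i, ξ i ^ 2) :=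
    fun ξ => HeatAux.trace_exp_neg_smul_a2 μ lam t ξ
  simp_rw [hpt]
  rw [MeasureTheory.integral_add ((integrable_gauss_pi hc1).const_mul _)
      (integrable_gauss_pi hc2),
    MeasureTheory.integral_const_mul, integral_gauss_pi hc1, integral_gauss_pi hc2,
    mul_add, mul_left_comm, final_alg hc1, final_alg hc2,
    show (4 * π * (t * μ) : ℝ) = 4 * π * μ * t by ring,
    show (4 * π * (t * (2 * μ + lam)) : ℝ) = 4 * π * (2 * μ + lam) * t by ring]
end

section
/- For every n ≥ 1 and every t > 0, ∫₀^∞ [ (2π)⁻ⁿ ∫_{ℝⁿ} Tr(exp(−t a₂(ξ))) cos(2 s ξₙ) dξ ] ds = (1/4) [ (n−1) (4πμt)^{−(n−1)/2} + (4π(2μ+λ)t)^{−(n−1)/2} ], where ξₙ denotes the last coordinate of ξ. (This is the boundary heat-trace density, i.e. the coefficient of Vol(∂Ω) in the second term of the two-term asymptotics of Σ_k e^{−τ_k t}, produced by the image term K(t,x,ς(x)) in the method of images for the half-space.) -/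
open Matrix BigOperators Real

open MeasureTheory NormedSpace

section Aux

/-- 1-dimensional Gaussian–cosine integral. -/
lemma integral_gaussian_cos {a : ℝ} (ha : 0 < a) (b : ℝ) :
    ∫ x : ℝ, Real.exp (-(a * x ^ 2)) * Real.cos (b * x)
      = Real.sqrt (π / a) * Real.exp (-(b ^ 2 / (4 * a))) := by
  have ha' : (0:ℝ) < ((a : ℂ)).re := by simpa using ha
  have hInt : Integrable fun x : ℝ =>
      Complex.exp (Complex.I * b * x) * Complex.exp (-(a:ℂ) * x ^ 2) := by
    have h := integrable_cexp_quadratic (b := (a : ℂ)) ha' (Complex.I * b) 0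
    refine h.congr (Filter.Eventually.of_forall fun x => ?_)
    simp only [← Complex.exp_add]
    congr 1
    ring
  have hre : ∀ x : ℝ,
      (Complex.exp (Complex.I * b * x) * Complex.exp (-(a:ℂ) * x ^ 2)).re
        = Real.exp (-(a * x ^ 2)) * Real.cos (b * x) := by
    intro x
    rw [← Complex.exp_add]
    have hz : Complex.I * b * x + -(a:ℂ) * x ^ 2
        = Complex.ofReal (-(a * x ^ 2)) + Complex.ofReal (b * x) * Complex.I := by
      push_cast; ring
    rw [hz, Complex.exp_re]
    simp [← Complex.ofReal_pow]
  have key := fourierIntegral_gaussian (b := (a:ℂ)) ha' (b : ℂ)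
  have h1 : ∫ x : ℝ, Real.exp (-(a * x ^ 2)) * Real.cos (b * x)
      = RCLike.re (∫ x : ℝ, Complex.exp (Complex.I * b * x) * Complex.exp (-(a:ℂ) * x ^ 2)) := by
    rw [← integral_re hInt]
    refine integral_congr_ae (Filter.Eventually.of_forall fun x => ?_)
    simp only [RCLike.re_to_complex]
    exact (hre x).symm
  rw [h1, key]
  have h2 : ((π:ℂ) / (a:ℂ)) ^ (1/2 : ℂ) = (Real.sqrt (π / a) : ℂ) := by
    rw [show ((π:ℂ) / (a:ℂ)) = ((π/a : ℝ) : ℂ) by push_cast; ring,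
      show (1/2 : ℂ) = ((1/2 : ℝ) : ℂ) by norm_num,
      ← Complex.ofReal_cpow (by positivity), Real.sqrt_eq_rpow]
  have h3 : Complex.exp (-(b:ℂ) ^ 2 / (4 * a)) = (Real.exp (-(b ^ 2 / (4 * a))) : ℂ) := by
    rw [Complex.ofReal_exp]
    congr 1
    push_cast
    ring
  rw [h2, h3, ← Complex.ofReal_mul, RCLike.re_to_complex]
  exact Complex.ofReal_re _

/-- Trace of the matrix exponential of the symbol. -/
lemma trace_exp_a2 (n : ℕ) (μ lam t : ℝ) (ξ : Fin n → ℝ) :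
    (exp ((-t) • a2 n μ lam ξ)).trace
      = ((n : ℝ) - 1) * Real.exp (-(t * μ * ∑ i, ξ i ^ 2))
        + Real.exp (-(t * (2 * μ + lam) * ∑ i, ξ i ^ 2)) := by
  classical
  letI : SeminormedRing (Matrix (Fin n) (Fin n) ℝ) := Matrix.linftyOpSemiNormedRing
  letI : NormedRing (Matrix (Fin n) (Fin n) ℝ) := Matrix.linftyOpNormedRing
  letI : NormedAlgebra ℝ (Matrix (Fin n) (Fin n) ℝ) := Matrix.linftyOpNormedAlgebra
  set r : ℝ := ∑ i, ξ i ^ 2 with hr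
  set P : Matrix (Fin n) (Fin n) ℝ := Matrix.of fun j k => ξ j * ξ k with hPdef
  have hP2 : P * P = r • P := by
    ext j k
    simp only [hPdef, Matrix.mul_apply, Matrix.smul_apply, Matrix.of_apply, smul_eq_mul, hr]
    rw [Finset.sum_mul]
    exact Finset.sum_congr rfl fun i _ => by ring
  have hPpow : ∀ k : ℕ, P ^ (k + 1) = r ^ k • P := by
    intro k
    induction k with
    | zero => simp
    | succ k ih =>
      rw [pow_succ, ih, smul_mul_assoc, hP2, smul_smul, ← pow_succ]
  have htraceP : P.trace = r := by
    simp [Matrix.trace, Matrix.diag, hPdef, hr, sq]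
  have hsplit : (-t) • a2 n μ lam ξ
      = (-(t * μ * r)) • (1 : Matrix (Fin n) (Fin n) ℝ) + (-(t * (μ + lam))) • P := by
    simp only [a2, smul_add, smul_smul, ← hr, ← hPdef]
    congr 1 <;> · congr 1; ring
  have hcomm : Commute ((-(t * μ * r)) • (1 : Matrix (Fin n) (Fin n) ℝ))
      ((-(t * (μ + lam))) • P) := ((Commute.one_left _).smul_left _).smul_right _
  set d : ℝ := -(t * (μ + lam)) with hd
  set c : ℝ := -(t * μ * r) with hc
  -- trace of exp of the projection part
  have hsum : Summable (fun k : ℕ => ((Nat.factorial k : ℝ))⁻¹ • (d • P) ^ k) :=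
    expSeries_summable' (𝕂 := ℝ) (d • P)
  have htrQ : (exp (d • P)).trace = (n : ℝ) - 1 + Real.exp (d * r) := by
    have hT := (Matrix.traceLinearMap (Fin n) ℝ ℝ).toContinuousLinearMap.map_tsum hsum
    have hTapp : ∀ M : Matrix (Fin n) (Fin n) ℝ,
        (Matrix.traceLinearMap (Fin n) ℝ ℝ).toContinuousLinearMap M = M.trace := fun _ => rfl
    rw [exp_eq_tsum ℝ]
    have hg : Summable fun k : ℕ => (((Nat.factorial k : ℝ))⁻¹ • (d • P) ^ k).trace := by
      have := hsum.map (Matrix.traceLinearMap (Fin n) ℝ ℝ).toAddMonoidHom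
        (Matrix.traceLinearMap (Fin n) ℝ ℝ).toContinuousLinearMap.continuous
      exact this
    have htr : (∑' k : ℕ, ((Nat.factorial k : ℝ))⁻¹ • (d • P) ^ k).trace
        = ∑' k : ℕ, (((Nat.factorial k : ℝ))⁻¹ • (d • P) ^ k).trace := by
      simpa only [hTapp] using hT
    rw [htr, Summable.tsum_eq_zero_add hg]
    have hterm : ∀ k : ℕ, (((Nat.factorial (k+1) : ℝ))⁻¹ • (d • P) ^ (k+1)).trace
        = (d * r) ^ (k+1) / (Nat.factorial (k+1)) := by
      intro k
      rw [smul_pow, hPpow, smul_smul, smul_smul, Matrix.trace_smul, htraceP, smul_eq_mul]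
      have hrw : (d * r) ^ (k+1) = d ^ (k+1) * (r ^ k * r) := by
        rw [mul_pow, pow_succ]; ring
      rw [hrw, div_eq_mul_inv]
      ring
    have h0 : (((Nat.factorial 0 : ℝ))⁻¹ • (d • P) ^ 0).trace = (n : ℝ) := by
      simp [Matrix.trace_one]
    rw [h0]
    have hshift : ∑' k : ℕ, (((Nat.factorial (k+1) : ℝ))⁻¹ • (d • P) ^ (k+1)).trace
        = ∑' k : ℕ, (d * r) ^ (k+1) / (Nat.factorial (k+1)) := tsum_congr hterm
    rw [hshift]
    have hexp : Real.exp (d * r) = ∑' k : ℕ, (d * r) ^ k / (Nat.factorial k) := by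
      rw [Real.exp_eq_exp_ℝ, exp_eq_tsum_div]
    have hsum2 : Summable fun k : ℕ => (d * r) ^ k / (Nat.factorial k : ℝ) :=
      Real.summable_pow_div_factorial (d * r)
    rw [hexp, Summable.tsum_eq_zero_add hsum2]
    simp
    ring
  rw [hsplit, Matrix.exp_add_of_commute _ _ hcomm]
  have hexp1 : exp (c • (1 : Matrix (Fin n) (Fin n) ℝ)) =
      Real.exp c • (1 : Matrix (Fin n) (Fin n) ℝ) := by
    rw [← Algebra.algebraMap_eq_smul_one, ← Algebra.algebraMap_eq_smul_one,
      Real.exp_eq_exp_ℝ, algebraMap_exp_comm]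
    rfl
  rw [hexp1, smul_mul_assoc, one_mul, Matrix.trace_smul, smul_eq_mul, htrQ]
  have hcdr : c + d * r = -(t * (2 * μ + lam) * r) := by rw [hc, hd]; ring
  rw [mul_add, ← Real.exp_add, hcdr, hc]
  ring_nf

variable {n : ℕ}

lemma prod_form (i0 : Fin n) (a s : ℝ) (ξ : Fin n → ℝ) :
    Real.exp (-(a * ∑ i, ξ i ^ 2)) * Real.cos (2 * s * ξ i0)
      = ∏ i, (Real.exp (-(a * ξ i ^ 2)) * (if i = i0 then Real.cos (2 * s * ξ i) else 1)) := by
  rw [Finset.prod_mul_distrib, Finset.prod_ite_eq' Finset.univ i0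
    (fun i => Real.cos (2 * s * ξ i)), if_pos (Finset.mem_univ i0), ← Real.exp_sum]
  congr 2
  rw [Finset.mul_sum, ← Finset.sum_neg_distrib]

lemma integrable_gauss_cos_pi (i0 : Fin n) {a : ℝ} (ha : 0 < a) (s : ℝ) :
    Integrable (fun ξ : Fin n → ℝ =>
      Real.exp (-(a * ∑ i, ξ i ^ 2)) * Real.cos (2 * s * ξ i0)) := by
  have h1 : Integrable fun x : ℝ => Real.exp (-(a * x ^ 2)) := by
    simpa [neg_mul] using integrable_exp_neg_mul_sq ha
  have key : Integrable (fun ξ : Fin n → ℝ =>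
      ∏ i, (Real.exp (-(a * ξ i ^ 2)) * (if i = i0 then Real.cos (2 * s * ξ i) else 1))) := by
    refine Integrable.fintype_prod (f := fun i x =>
      Real.exp (-(a * x ^ 2)) * (if i = i0 then Real.cos (2 * s * x) else 1)) fun i => ?_
    by_cases h : i = i0
    · simp only [h, eq_self_iff_true, if_true]
      have hb : Integrable fun x : ℝ => Real.cos (2 * s * x) * Real.exp (-(a * x ^ 2)) := by
        refine h1.bdd_mul (c := 1) ?_ (ae_of_all _ fun x => by simpa using Real.abs_cos_le_one _)
        exact (Real.continuous_cos.comp (continuous_const.mul continuous_id)).aestronglyMeasurable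
      simpa [mul_comm] using hb
    · simpa [h] using h1
  exact key.congr (Filter.Eventually.of_forall fun ξ => (prod_form i0 a s ξ).symm)

lemma integral_gauss_cos_pi (i0 : Fin n) {a : ℝ} (ha : 0 < a) (s : ℝ) :
    (∫ ξ : Fin n → ℝ, Real.exp (-(a * ∑ i, ξ i ^ 2)) * Real.cos (2 * s * ξ i0))
      = Real.sqrt (π / a) ^ n * Real.exp (-(s ^ 2 / a)) := by
  simp_rw [prod_form i0 a s]
  rw [MeasureTheory.volume_pi, MeasureTheory.integral_fintype_prod_eq_prod (f := fun i x =>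
    Real.exp (-(a * x ^ 2)) * (if i = i0 then Real.cos (2 * s * x) else 1))]
  have hfac : ∀ i : Fin n,
      (∫ x : ℝ, Real.exp (-(a * x ^ 2)) * (if i = i0 then Real.cos (2 * s * x) else 1))
        = Real.sqrt (π / a) * (if i = i0 then Real.exp (-(s ^ 2 / a)) else 1) := by
    intro i
    by_cases h : i = i0
    · simp only [h, eq_self_iff_true, if_true]
      rw [integral_gaussian_cos ha (2 * s)]
      congr 2
      field_simp
      ring
    · simp only [h, if_neg h, mul_one]
      simpa [neg_mul] using integral_gaussian a
  simp_rw [hfac]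
  rw [Finset.prod_mul_distrib, Finset.prod_const, Finset.prod_ite_eq' Finset.univ i0
    (fun _ => Real.exp (-(s ^ 2 / a))), if_pos (Finset.mem_univ i0)]
  simp

lemma outer_gaussian {a : ℝ} (ha : 0 < a) :
    ∫ s in Set.Ioi (0:ℝ), Real.exp (-(s ^ 2 / a)) = Real.sqrt (π * a) / 2 := by
  have h : ∀ s : ℝ, Real.exp (-(s ^ 2 / a)) = Real.exp (-a⁻¹ * s ^ 2) := by
    intro s; congr 1; field_simp
  simp_rw [h]
  rw [integral_gaussian_Ioi]
  congr 2
  field_simp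

lemma outer_integrable {a : ℝ} (ha : 0 < a) :
    IntegrableOn (fun s : ℝ => Real.exp (-(s ^ 2 / a))) (Set.Ioi 0) := by
  have h := (integrable_exp_neg_mul_sq (show (0:ℝ) < a⁻¹ by positivity)).integrableOn
    (s := Set.Ioi (0:ℝ))
  refine h.congr_fun (fun s _ => ?_) measurableSet_Ioi
  congr 1; field_simp

lemma main_const {a : ℝ} (ha : 0 < a) (n : ℕ) :
    ((2 * π) ^ n : ℝ)⁻¹ * (Real.sqrt (π / a) ^ n * (Real.sqrt (π * a) / 2))
      = (1 / 4) * (4 * π * a) ^ (-((n : ℝ) - 1) / 2) := by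
  have hX : (0:ℝ) < 4 * π * a := by positivity
  have h1 : ((2 * π) ^ n : ℝ)⁻¹ * Real.sqrt (π / a) ^ n = (4 * π * a) ^ (-(n : ℝ) / 2) := by
    rw [← inv_pow, ← mul_pow]
    have e1 : (2 * π)⁻¹ * Real.sqrt (π / a) = Real.sqrt ((4 * π * a)⁻¹) := by
      rw [show (2 * π)⁻¹ = Real.sqrt (((2 * π)⁻¹) ^ 2) by rw [Real.sqrt_sq (by positivity)],
        ← Real.sqrt_mul (by positivity)]
      congr 1
      field_simp
      ring
    rw [e1, Real.sqrt_eq_rpow, ← Real.rpow_natCast ((4 * π * a)⁻¹ ^ (1/2 : ℝ)) n,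
      ← Real.rpow_mul (by positivity), Real.inv_rpow hX.le, ← Real.rpow_neg hX.le]
    congr 1
    ring
  have h2 : Real.sqrt (π * a) = (4 * π * a) ^ ((1:ℝ) / 2) / 2 := by
    rw [show π * a = (4 * π * a) / 4 by ring, Real.sqrt_div (by positivity) 4,
      show Real.sqrt 4 = 2 by rw [show (4:ℝ) = 2 ^ 2 by norm_num, Real.sqrt_sq (by norm_num)],
      Real.sqrt_eq_rpow]
  calc ((2 * π) ^ n : ℝ)⁻¹ * (Real.sqrt (π / a) ^ n * (Real.sqrt (π * a) / 2))
      = (((2 * π) ^ n : ℝ)⁻¹ * Real.sqrt (π / a) ^ n) * ((4 * π * a) ^ ((1:ℝ)/2)) / 4 := by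
        rw [h2]; ring
    _ = (4 * π * a) ^ (-(n : ℝ) / 2) * (4 * π * a) ^ ((1:ℝ)/2) / 4 := by rw [h1]
    _ = (1 / 4) * (4 * π * a) ^ (-((n : ℝ) - 1) / 2) := by
        rw [← Real.rpow_add hX, show -(n : ℝ) / 2 + 1/2 = -((n : ℝ) - 1) / 2 by ring]
        ring

end Aux

open NormedSpace in
/-- the boundary heat-trace density produced by the image term in the method
of images for the half-space:
∫₀^∞ (2π)⁻ⁿ ∫_{ℝⁿ} Tr(exp(−t a₂(ξ))) cos(2sξₙ) dξ ds
  = (1/4)[(n−1)(4πμt)^{−(n−1)/2} + (4π(2μ+λ)t)^{−(n−1)/2}]. -/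
theorem boundary_heat_trace_density (n : ℕ) (hn : 1 ≤ n) (μ lam : ℝ) (hμ : 0 < μ)
    (hlam : 0 ≤ lam + μ) (t : ℝ) (ht : 0 < t) :
    (∫ s in Set.Ioi (0 : ℝ),
        ((2 * π) ^ n)⁻¹ *
          ∫ ξ : Fin n → ℝ,
            (exp ((-t) • a2 n μ lam ξ)).trace * Real.cos (2 * s * ξ ⟨n - 1, by omega⟩))
      = (1 / 4) * (((n : ℝ) - 1) * (4 * π * μ * t) ^ (-((n : ℝ) - 1) / 2) +
          (4 * π * (2 * μ + lam) * t) ^ (-((n : ℝ) - 1) / 2)) := by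
  have ha1 : (0:ℝ) < t * μ := by positivity
  have hb : (0:ℝ) < 2 * μ + lam := by linarith
  have ha2 : (0:ℝ) < t * (2 * μ + lam) := by positivity
  have hinner : ∀ (i0 : Fin n) (s : ℝ),
      (∫ ξ : Fin n → ℝ, (exp ((-t) • a2 n μ lam ξ)).trace * Real.cos (2 * s * ξ i0))
        = ((n : ℝ) - 1) * (Real.sqrt (π / (t * μ)) ^ n * Real.exp (-(s ^ 2 / (t * μ))))
          + Real.sqrt (π / (t * (2 * μ + lam))) ^ n
            * Real.exp (-(s ^ 2 / (t * (2 * μ + lam)))) := by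
    intro i0 s
    have hpt : ∀ ξ : Fin n → ℝ,
        (exp ((-t) • a2 n μ lam ξ)).trace * Real.cos (2 * s * ξ i0)
          = ((n : ℝ) - 1) * (Real.exp (-(t * μ * ∑ i, ξ i ^ 2)) * Real.cos (2 * s * ξ i0))
            + Real.exp (-(t * (2 * μ + lam) * ∑ i, ξ i ^ 2)) * Real.cos (2 * s * ξ i0) := by
      intro ξ
      rw [trace_exp_a2]
      ring
    simp_rw [hpt]
    rw [integral_add ((integrable_gauss_cos_pi i0 ha1 s).const_mul _)
      (integrable_gauss_cos_pi i0 ha2 s), integral_const_mul,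
      integral_gauss_cos_pi i0 ha1 s, integral_gauss_cos_pi i0 ha2 s]
  simp_rw [hinner]
  have hpt2 : ∀ s : ℝ,
      ((2 * π) ^ n : ℝ)⁻¹ *
          (((n : ℝ) - 1) * (Real.sqrt (π / (t * μ)) ^ n * Real.exp (-(s ^ 2 / (t * μ))))
            + Real.sqrt (π / (t * (2 * μ + lam))) ^ n
              * Real.exp (-(s ^ 2 / (t * (2 * μ + lam)))))
        = (((2 * π) ^ n : ℝ)⁻¹ * ((n : ℝ) - 1) * Real.sqrt (π / (t * μ)) ^ n)
            * Real.exp (-(s ^ 2 / (t * μ)))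
          + (((2 * π) ^ n : ℝ)⁻¹ * Real.sqrt (π / (t * (2 * μ + lam))) ^ n)
            * Real.exp (-(s ^ 2 / (t * (2 * μ + lam)))) := by
    intro s; ring
  simp_rw [hpt2]
  rw [integral_add (((outer_integrable ha1).const_mul _)) ((outer_integrable ha2).const_mul _),
    integral_const_mul, integral_const_mul, outer_gaussian ha1, outer_gaussian ha2]
  have e1 : 4 * π * μ * t = 4 * π * (t * μ) := by ring
  have e2 : 4 * π * (2 * μ + lam) * t = 4 * π * (t * (2 * μ + lam)) := by ring
  rw [e1, e2]
  have m1 := main_const ha1 n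
  have m2 := main_const ha2 n
  calc ((2 * π) ^ n : ℝ)⁻¹ * ((n : ℝ) - 1) * Real.sqrt (π / (t * μ)) ^ n
          * (Real.sqrt (π * (t * μ)) / 2)
        + ((2 * π) ^ n : ℝ)⁻¹ * Real.sqrt (π / (t * (2 * μ + lam))) ^ n
          * (Real.sqrt (π * (t * (2 * μ + lam))) / 2)
      = ((n : ℝ) - 1) * (((2 * π) ^ n : ℝ)⁻¹
            * (Real.sqrt (π / (t * μ)) ^ n * (Real.sqrt (π * (t * μ)) / 2)))
        + (((2 * π) ^ n : ℝ)⁻¹ * (Real.sqrt (π / (t * (2 * μ + lam))) ^ n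
            * (Real.sqrt (π * (t * (2 * μ + lam))) / 2))) := by ring
    _ = (1 / 4) * (((n : ℝ) - 1) * (4 * π * (t * μ)) ^ (-((n : ℝ) - 1) / 2) +
          (4 * π * (t * (2 * μ + lam))) ^ (-((n : ℝ) - 1) / 2)) := by
        rw [m1, m2]; ring
end
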